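/- arXiv:2605.29722 — 2 statements merged into one kernel-verified Lean document; each statement's English description precedes it below -/
import Mathlib

section
/- Let R be a commutative unital ring, α : ℤ → R a family of elements, and S_s^k(n) the associated Svinin polynomials. Then for every integer k ≥ 1 and every n ∈ ℤ, S_k^k(n) + S_k^k(n−1) = S_{k+1}^k(n). -/
/-- Svinin polynomials: `svinin α s k n` is `S_s^k(n)`, defined by
`S_s^0(n) = 1` and `S_s^k(n) = Σ_{j=0}^{s−1} α_{n−k−j+1} · S_{s−j}^{k−1}(n−j)` for `k ≥ 1`. -/
def svinin {R : Type*} [Ring R] (α : ℤ → R) : ℕ → ℕ → ℤ → R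
  | _, 0, _ => 1
  | s, k + 1, n =>
      ∑ j ∈ Finset.range s,
        α (n - ((k : ℤ) + 1) - (j : ℤ) + 1) * svinin α (s - j) k (n - (j : ℤ))

section Aux

variable {R : Type*} [CommRing R] (α : ℤ → R)

lemma svinin_zero' (s : ℕ) (n : ℤ) : svinin α s 0 n = 1 := rfl

lemma svinin_succ' (s k : ℕ) (n : ℤ) :
    svinin α s (k+1) n = ∑ j ∈ Finset.range s,
        α (n - ((k : ℤ) + 1) - (j : ℤ) + 1) * svinin α (s - j) k (n - (j : ℤ)) := rfl

lemma svinin_one' (k : ℕ) (n : ℤ) :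
    svinin α 1 (k+1) n = α (n - k) * svinin α 1 k n := by
  rw [svinin_succ']
  simp only [Finset.sum_range_one, Nat.cast_zero, Nat.sub_zero]
  ring_nf

/-- Peeling the `j = 0` term of the defining sum. -/
lemma svinin_R1 (s k : ℕ) (n : ℤ) :
    svinin α (s+1) (k+1) n = α (n - k) * svinin α (s+1) k n + svinin α s (k+1) (n-1) := by
  rw [svinin_succ', Finset.sum_range_succ', svinin_succ', add_comm]
  congr 1
  · push_cast; ring_nf
  · apply Finset.sum_congr rfl
    intro j hj
    have h1 : s + 1 - (j + 1) = s - j := by omega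
    rw [h1]
    push_cast
    ring_nf

lemma svinin_R2zero (k : ℕ) (n : ℤ) :
    svinin α 1 (k+1) n = α n * svinin α 1 k (n-1) := by
  induction k generalizing n with
  | zero => rw [svinin_one', svinin_zero', svinin_zero']; push_cast; ring_nf
  | succ k ih =>
    rw [svinin_one', ih, svinin_one']
    push_cast
    ring_nf

/-- The difference identity `S_{s+1}^{k+1}(n) − S_s^{k+1}(n) = α(n−s)·S_{s+1}^k(n−1)`. -/
lemma svinin_R2 (k : ℕ) : ∀ (s : ℕ) (n : ℤ),
    svinin α (s+1) (k+1) n = svinin α s (k+1) n + α (n - s) * svinin α (s+1) k (n-1) := by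
  induction k with
  | zero =>
    intro s n
    rw [svinin_succ', Finset.sum_range_succ, svinin_succ']
    have h1 : ∀ j ∈ Finset.range s,
        α (n - (((0:ℕ):ℤ) + 1) - j + 1) * svinin α (s + 1 - j) 0 (n - j)
        = α (n - (((0:ℕ):ℤ) + 1) - j + 1) * svinin α (s - j) 0 (n - j) :=
      fun j hj => by rw [svinin_zero', svinin_zero']
    rw [Finset.sum_congr rfl h1, svinin_zero', svinin_zero', mul_one, mul_one]
    congr 2
    push_cast
    ring
  | succ k ih =>
    intro s n
    rw [svinin_succ' α (s+1) (k+1), Finset.sum_range_succ, svinin_succ' α s (k+1),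
      svinin_succ' α (s+1) k, Finset.sum_range_succ, mul_add, Finset.mul_sum]
    push_cast
    have hsum : ∀ j ∈ Finset.range s,
        α (n - ((k:ℤ)+1+1) - j + 1) * svinin α (s+1-j) (k+1) (n-j)
        = α (n - ((k:ℤ)+1+1) - j + 1) * svinin α (s-j) (k+1) (n-j)
          + α (n - s) * (α (n-1 - ((k:ℤ)+1) - j + 1) * svinin α (s+1-j) k (n-1-j)) := by
      intro j hj
      have hj' : j < s := Finset.mem_range.mp hj
      have h1 : s + 1 - j = (s - j) + 1 := by omega
      rw [h1, ih]
      have h2 : ((s - j : ℕ) : ℤ) = (s:ℤ) - j := by omega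
      rw [h2]
      have h3 : n - j - ((s:ℤ) - j) = n - s := by ring
      have h4 : n - j - 1 = n - 1 - j := by ring
      rw [h3, h4, ← h1]
      ring
    rw [Finset.sum_congr rfl hsum, Finset.sum_add_distrib, ← Finset.mul_sum]
    have h5 : s + 1 - s = 1 := by omega
    have hT : α (n - ((k:ℤ)+1+1) - s + 1) * svinin α (s+1-s) (k+1) (n-s)
        = α (n - s) * (α (n-1 - ((k:ℤ)+1) - s + 1) * svinin α (s+1-s) k (n-1-s)) := by
      rw [h5, svinin_R2zero]
      have e1 : n - (s:ℤ) - 1 = n - 1 - s := by ring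
      have e2 : n - ((k:ℤ)+1+1) - s + 1 = n - 1 - ((k:ℤ)+1) - s + 1 := by ring
      rw [e1, e2]
      ring
    rw [hT]
    ring

lemma svinin_prod_shift (c : ℤ) (m : ℕ) :
    ∏ i ∈ Finset.range (m+1), α (c + i) = (∏ i ∈ Finset.range m, α (c + 1 + i)) * α c := by
  rw [Finset.prod_range_succ']
  congr 1
  · exact Finset.prod_congr rfl fun i _ => by congr 1; push_cast; ring
  · simp

lemma svinin_Qbase (d : ℕ) (n : ℤ) :
    svinin α 1 (d+1) n = (∏ i ∈ Finset.range (d+1), α (n - d + i)) * 1 := by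
  induction d generalizing n with
  | zero => simp [svinin_one', svinin_zero']
  | succ d ih =>
    rw [svinin_one', ih, svinin_prod_shift α (n - (d+1:ℕ)) (d+1)]
    have h1 : n - ((d+1:ℕ):ℤ) + 1 = n - d := by push_cast; ring
    rw [h1]
    ring

/-- The key factorization `S_{u+1}^{u+d+1}(n) = (∏ α)·S_{u+d+2}^u(n)`. -/
lemma svinin_Q : ∀ (u d : ℕ) (n : ℤ),
    svinin α (u+1) (u+d+1) n
      = (∏ i ∈ Finset.range (d+1), α (n - u - d + i)) * svinin α (u+d+2) u n := by
  intro u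
  induction u with
  | zero =>
    intro d n
    have := svinin_Qbase α d n
    simpa [svinin_zero'] using this
  | succ v ihu =>
    intro d n
    induction d generalizing n with
    | zero =>
      rw [show v+1+0+1 = v+2 from by omega, show v+1+0+2 = v+3 from by omega,
        show v+1+1 = v+2 from by omega]
      have r1 := svinin_R1 α (v+1) (v+1) n
      rw [show (v+1)+1 = v+2 from by omega] at r1
      have ihu' := ihu 1 (n-1)
      rw [show v+1+1 = v+2 from by omega, show v+1+2 = v+3 from by omega] at ihu'
      have r2 := svinin_R2 α v (v+2) n
      rw [show v+2+1 = v+3 from by omega] at r2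
      rw [r1, ihu', r2]
      simp only [Finset.prod_range_one, Finset.prod_range_succ, Nat.cast_zero, Nat.cast_one]
      push_cast
      ring_nf
    | succ e ihd =>
      rw [show v+1+(e+1)+1 = v+e+3 from by omega, show v+1+(e+1)+2 = v+e+4 from by omega,
        show v+1+1 = v+2 from by omega]
      have r1 := svinin_R1 α (v+1) (v+e+2) n
      rw [show (v+1)+1 = v+2 from by omega, show (v+e+2)+1 = v+e+3 from by omega] at r1
      have ihd' := ihd n
      rw [show v+1+1 = v+2 from by omega, show v+1+e+1 = v+e+2 from by omega,
        show v+1+e+2 = v+e+3 from by omega] at ihd'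
      have ihu' := ihu (e+2) (n-1)
      rw [show v+(e+2)+1 = v+e+3 from by omega, show v+(e+2)+2 = v+e+4 from by omega] at ihu'
      have r2 := svinin_R2 α v (v+e+3) n
      rw [show (v+e+3)+1 = v+e+4 from by omega] at r2
      rw [r1, ihd', ihu', r2]
      rw [svinin_prod_shift α ((n-1) - (v:ℕ) - ((e+2:ℕ):ℤ)) (e+2)]
      rw [show (n-1) - ((v:ℕ):ℤ) - ((e+2:ℕ):ℤ) + 1 = n - ((v+1:ℕ):ℤ) - ((e+1:ℕ):ℤ) from by
        push_cast; ring]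
      rw [svinin_prod_shift α (n - ((v+1:ℕ):ℤ) - ((e+1:ℕ):ℤ)) (e+1)]
      rw [show n - ((v+1:ℕ):ℤ) - ((e+1:ℕ):ℤ) + 1 = n - ((v+1:ℕ):ℤ) - ((e:ℕ):ℤ) from by
        push_cast; ring]
      push_cast
      ring_nf

end Aux

/-- In a commutative ring, for `k ≥ 1`: `S_k^k(n) + S_k^k(n−1) = S_{k+1}^k(n)`. -/
theorem svinin_sum_identity {R : Type*} [CommRing R] (α : ℤ → R)
    (k : ℕ) (hk : 1 ≤ k) (n : ℤ) :
    svinin α k k n + svinin α k k (n - 1) = svinin α (k + 1) k n := by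
  obtain ⟨m, rfl⟩ : ∃ m, k = m + 1 := ⟨k - 1, by omega⟩
  rw [svinin_R1 α (m+1) m n]
  have hq := svinin_Q α m 0 n
  rw [show m+0+1 = m+1 from by omega, show m+0+2 = m+2 from by omega] at hq
  simp only [zero_add, Finset.prod_range_one, Nat.cast_zero, sub_zero, add_zero] at hq
  rw [hq]
end

section
/- Let R be an associative unital ring (not necessarily commutative), α : ℤ → R a family of elements, and S_s^k(n) the associated non-commutative Svinin polynomials. Then for every integer r ≥ 1 and every n ∈ ℤ, α_n · S_r^r(n+r) − S_r^r(n+r−2) · α_n = S_r^{r+1}(n+r) − S_r^{r+1}(n+r−1). -/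
lemma svinin_def {R : Type*} [Ring R] (α : ℤ → R) (s k : ℕ) (n : ℤ) :
    svinin α s (k+1) n =
      ∑ j ∈ Finset.range s,
        α (n - ((k : ℤ) + 1) - (j : ℤ) + 1) * svinin α (s - j) k (n - (j : ℤ)) := rfl

lemma svinin_zero {R : Type*} [Ring R] (α : ℤ → R) (k : ℕ) (n : ℤ) :
    svinin α 0 (k+1) n = 0 := by
  rw [svinin_def]; simp

lemma svinin_succ_left {R : Type*} [Ring R] (α : ℤ → R) :
    ∀ (k s : ℕ) (m : ℤ), svinin α (s+1) (k+1) m =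
      svinin α s (k+1) m + svinin α (s+1) k (m-1) * α (m - (s : ℤ)) := by
  intro k
  induction k with
  | zero =>
    intro s m
    rw [svinin_def, svinin_def, Finset.sum_range_succ]
    congr 1
    show α (m - ((0:ℤ) + 1) - (s:ℤ) + 1) * svinin α (s+1-s) 0 (m - s) = _
    have h1 : svinin α (s+1-s) 0 (m - s) = 1 := rfl
    have h2 : svinin α (s+1) 0 (m-1) = 1 := rfl
    rw [h1, h2, mul_one, one_mul]
    congr 1
    ring
  | succ k IH =>
    intro s m
    rw [svinin_def]
    have step : ∀ j ∈ Finset.range (s+1),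
        α (m - ((k+1 : ℕ) : ℤ) - 1 - (j:ℤ) + 1) * svinin α (s+1-j) (k+1) (m - (j:ℤ)) =
        α (m - ((k+1 : ℕ) : ℤ) - 1 - (j:ℤ) + 1) * svinin α (s-j) (k+1) (m - (j:ℤ))
        + (α ((m-1) - ((k : ℤ) + 1) - (j:ℤ) + 1) * svinin α (s+1-j) k ((m-1) - (j:ℤ)))
            * α (m - (s:ℤ)) := by
      intro j hj
      have hjs : j ≤ s := by simpa [Nat.lt_succ_iff] using Finset.mem_range.mp hj
      have e1 : s + 1 - j = (s - j) + 1 := by omega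
      have e2 : (m - (j:ℤ)) - ((s-j : ℕ):ℤ) = m - (s:ℤ) := by
        push_cast [Nat.cast_sub hjs]; ring
      have e4 : m - (j:ℤ) - 1 = (m-1) - (j:ℤ) := by ring
      have e5 : m - ((k+1 : ℕ) : ℤ) - 1 - (j:ℤ) + 1 = (m-1) - ((k : ℤ) + 1) - (j:ℤ) + 1 := by
        push_cast; ring
      rw [e1, IH (s-j) (m - (j:ℤ)), mul_add, e2, e4, e5, ← mul_assoc]
    calc ∑ j ∈ Finset.range (s+1),
          α (m - (((k+1 : ℕ) : ℤ)+1) - (j:ℤ) + 1) * svinin α (s+1-j) (k+1) (m - (j:ℤ))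
        = ∑ j ∈ Finset.range (s+1),
          (α (m - ((k+1 : ℕ) : ℤ) - 1 - (j:ℤ) + 1) * svinin α (s-j) (k+1) (m - (j:ℤ))
          + (α ((m-1) - ((k : ℤ) + 1) - (j:ℤ) + 1) * svinin α (s+1-j) k ((m-1) - (j:ℤ)))
              * α (m - (s:ℤ))) := by
          refine Finset.sum_congr rfl fun j hj => ?_
          rw [← step j hj]
          congr 2
          ring
      _ = svinin α s (k+1+1) m + svinin α (s+1) (k+1) (m-1) * α (m - (s:ℤ)) := by
          rw [Finset.sum_add_distrib, ← Finset.sum_mul]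
          congr 1
          · rw [Finset.sum_range_succ]
            have : svinin α (s-s) (k+1) (m - (s:ℤ)) = 0 := by
              rw [Nat.sub_self]; exact svinin_zero α k _
            rw [this, mul_zero, add_zero, svinin_def]
            refine Finset.sum_congr rfl fun j hj => ?_
            have e : m - ((k+1:ℕ):ℤ) - 1 - (j:ℤ) + 1 = m - (((k+1:ℕ):ℤ)+1) - (j:ℤ) + 1 := by
              push_cast; ring
            rw [e]

set_option maxHeartbeats 1600000 in
/-- For every `r ≥ 1` and `n ∈ ℤ`:
`α_n · S_r^r(n+r) − S_r^r(n+r−2) · α_n = S_r^{r+1}(n+r) − S_r^{r+1}(n+r−1)`. -/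
theorem svinin_commutator_identity {R : Type*} [Ring R] (α : ℤ → R)
    (r : ℕ) (hr : 1 ≤ r) (n : ℤ) :
    α n * svinin α r r (n + r) - svinin α r r (n + r - 2) * α n =
      svinin α r (r + 1) (n + r) - svinin α r (r + 1) (n + r - 1) := by
  obtain ⟨m, rfl⟩ : ∃ m, r = m + 1 := ⟨r - 1, by omega⟩
  have key : ∀ j ∈ Finset.range (m+1),
      svinin α (m+1-j) (m+1) (n + (m:ℤ) - j) =
        svinin α (m-j) (m+1) (n + (m:ℤ) - j)
        + svinin α (m+1-j) m (n + (m:ℤ) - 1 - j) * α n := by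
    intro j hj
    have hjm : j ≤ m := by simpa [Nat.lt_succ_iff] using Finset.mem_range.mp hj
    have e1 : m + 1 - j = (m - j) + 1 := by omega
    have e2 : (n + (m:ℤ) - j) - 1 = n + (m:ℤ) - 1 - j := by ring
    have e3 : (n + (m:ℤ) - j) - ((m-j : ℕ):ℤ) = n := by
      push_cast [Nat.cast_sub hjm]; ring
    rw [e1, svinin_succ_left α m (m-j) (n + (m:ℤ) - j), e2, e3]
  have hS1 : svinin α 1 (m+1) n = svinin α 1 m (n-1) * α n := by
    have h := svinin_succ_left α m 0 n
    rw [svinin_zero α m n] at h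
    simpa using h
  have hA : svinin α (m+1) (m+1+1) (n + ((m+1 : ℕ) : ℤ)) =
      (∑ j ∈ Finset.range m, α (n - 1 - j) * svinin α (m-j) (m+1) (n + (m:ℤ) - j))
      + α n * svinin α (m+1) (m+1) (n + ((m+1 : ℕ) : ℤ)) := by
    rw [svinin_def, Finset.sum_range_succ']
    congr 1
    · refine Finset.sum_congr rfl fun j hj => ?_
      have e1 : m + 1 - (j+1) = m - j := by omega
      have e2 : (n + ((m+1 : ℕ) : ℤ)) - (((m+1 : ℕ):ℤ) + 1) - ((j+1 : ℕ):ℤ) + 1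
          = n - 1 - j := by push_cast; ring
      have e3 : (n + ((m+1 : ℕ) : ℤ)) - ((j+1 : ℕ):ℤ) = n + (m:ℤ) - j := by
        push_cast; ring
      rw [e1, e2, e3]
    · have e2 : (n + ((m+1 : ℕ) : ℤ)) - (((m+1 : ℕ):ℤ) + 1) - ((0 : ℕ):ℤ) + 1 = n := by
        push_cast; ring
      have e3 : (n + ((m+1 : ℕ) : ℤ)) - ((0 : ℕ):ℤ) = n + ((m+1 : ℕ) : ℤ) := by
        push_cast; ring
      rw [Nat.sub_zero, e2, e3]
  have hB : svinin α (m+1) (m+1+1) (n + ((m+1 : ℕ) : ℤ) - 1) =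
      (∑ j ∈ Finset.range m, α (n - 1 - j) * svinin α (m+1-j) (m+1) (n + (m:ℤ) - j))
      + α (n - 1 - (m:ℤ)) * svinin α 1 (m+1) n := by
    rw [svinin_def, Finset.sum_range_succ]
    congr 1
    · refine Finset.sum_congr rfl fun j hj => ?_
      have e2 : (n + ((m+1 : ℕ) : ℤ) - 1) - (((m+1 : ℕ):ℤ) + 1) - (j:ℤ) + 1
          = n - 1 - j := by push_cast; ring
      have e3 : (n + ((m+1 : ℕ) : ℤ) - 1) - (j:ℤ) = n + (m:ℤ) - j := by
        push_cast; ring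
      rw [e2, e3]
    · have e1 : m + 1 - m = 1 := by omega
      have e2 : (n + ((m+1 : ℕ) : ℤ) - 1) - (((m+1 : ℕ):ℤ) + 1) - (m:ℤ) + 1
          = n - 1 - (m:ℤ) := by push_cast; ring
      have e3 : (n + ((m+1 : ℕ) : ℤ) - 1) - (m:ℤ) = n := by push_cast; ring
      rw [e1, e2, e3]
  have hC : svinin α (m+1) (m+1) (n + ((m+1 : ℕ) : ℤ) - 2) =
      (∑ j ∈ Finset.range m, α (n - 1 - j) * svinin α (m+1-j) m (n + (m:ℤ) - 1 - j))
      + α (n - 1 - (m:ℤ)) * svinin α 1 m (n-1) := by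
    rw [svinin_def, Finset.sum_range_succ]
    congr 1
    · refine Finset.sum_congr rfl fun j hj => ?_
      have e2 : (n + ((m+1 : ℕ) : ℤ) - 2) - ((m:ℤ) + 1) - (j:ℤ) + 1
          = n - 1 - j := by push_cast; ring
      have e3 : (n + ((m+1 : ℕ) : ℤ) - 2) - (j:ℤ) = n + (m:ℤ) - 1 - j := by
        push_cast; ring
      rw [e2, e3]
    · have e1 : m + 1 - m = 1 := by omega
      have e2 : (n + ((m+1 : ℕ) : ℤ) - 2) - ((m:ℤ) + 1) - (m:ℤ) + 1
          = n - 1 - (m:ℤ) := by push_cast; ring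
      have e3 : (n + ((m+1 : ℕ) : ℤ) - 2) - (m:ℤ) = n - 1 := by push_cast; ring
      rw [e1, e2, e3]
  have hsum : ∑ j ∈ Finset.range m, α (n - 1 - j) * svinin α (m+1-j) (m+1) (n + (m:ℤ) - j)
      = (∑ j ∈ Finset.range m, α (n - 1 - j) * svinin α (m-j) (m+1) (n + (m:ℤ) - j))
      + (∑ j ∈ Finset.range m, α (n - 1 - j) * svinin α (m+1-j) m (n + (m:ℤ) - 1 - j))
          * α n := by
    rw [Finset.sum_mul, ← Finset.sum_add_distrib]
    refine Finset.sum_congr rfl fun j hj => ?_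
    have hj' : j ∈ Finset.range (m+1) :=
      Finset.mem_range.mpr (by have := Finset.mem_range.mp hj; omega)
    rw [key j hj', mul_add, mul_assoc]
  rw [hA, hB, hC, hS1, hsum]
  rw [add_mul, Finset.sum_mul]
  simp only [mul_assoc]
  abel
end
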